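/- (Sinkhorn's theorem, existence.) Let M be an n×m matrix with strictly positive entries, and let r ∈ ℝ^n, c ∈ ℝ^m be vectors with strictly positive entries satisfying Σ_i r_i = Σ_j c_j. Then there exist strictly positive vectors u ∈ ℝ^n and v ∈ ℝ^m such that the matrix P with P_ij = u_i · M_ij · v_j has row sums equal to r and column sums equal to c. -/

import Mathlib

open Real Finset

noncomputable section SinkhornAux

/-- `exp z ≥ z²/4` for `z ≥ 0`. -/
private lemma sk_exp_ge_sq (z : ℝ) (hz : 0 ≤ z) : z^2/4 ≤ Real.exp z := by
  have h1 : (1 + z/2) ≤ Real.exp (z/2) := by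
    have := Real.add_one_le_exp (z/2); linarith
  have h2 : Real.exp z = (Real.exp (z/2))^2 := by
    rw [sq, ← Real.exp_add]; ring_nf
  nlinarith [Real.exp_pos (z/2)]

/-- lower bound for each term of the Sinkhorn potential. -/
private lemma sk_term_lb (Mv a z : ℝ) (hMv : 0 < Mv) (ha : 0 ≤ a) :
    -(a^2/Mv) ≤ Mv * Real.exp z - a * z := by
  rcases le_or_gt z 0 with hz | hz
  · have h1 : 0 < Mv * Real.exp z := by positivity
    have h2 : 0 ≤ -(a * z) := by nlinarith
    have h3 : -(a^2/Mv) ≤ 0 := by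
      have : 0 ≤ a^2/Mv := by positivity
      linarith
    linarith
  · have h1 := sk_exp_ge_sq z hz.le
    have key : (a*z - Mv*Real.exp z) * Mv ≤ a^2 := by
      nlinarith [sq_nonneg (Mv*z/2 - a),
        mul_le_mul_of_nonneg_left h1 (by positivity : (0:ℝ) ≤ Mv*Mv)]
    rw [neg_le]
    rw [le_div_iff₀ hMv]
    nlinarith

/-- upper bound on `z` given a bound on the term. -/
private lemma sk_z_ub (Mv a z B : ℝ) (hMv : 0 < Mv) (ha : 0 < a) (hB : 0 < B)
    (h : Mv * Real.exp z - a * z ≤ B) : z ≤ (4*a + 4*B)/Mv + 1 := by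
  rcases le_or_gt z 0 with hz | hz
  · have : 0 < (4*a + 4*B)/Mv := by positivity
    linarith
  · by_contra hcon
    push_neg at hcon
    have hD : (4*a + 4*B)/Mv + 1 < z := hcon
    have hz1 : 1 < z := by
      have : 0 < (4*a + 4*B)/Mv := by positivity
      linarith
    have h1 := sk_exp_ge_sq z hz.le
    have h2 : Mv * (z^2/4) ≤ Mv * Real.exp z := by nlinarith
    have h3 : Mv * z > 4*a + 4*B + Mv := by
      have := (div_lt_iff₀ hMv).mp (by linarith : (4*a + 4*B)/Mv < z - 1)
      nlinarith
    nlinarith [mul_pos ha (sub_pos.mpr hz1), mul_pos hB (sub_pos.mpr hz1)]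

/-- lower bound on `z` given a bound on the term. -/
private lemma sk_z_lb (Mv a z B : ℝ) (hMv : 0 < Mv) (ha : 0 < a)
    (h : Mv * Real.exp z - a * z ≤ B) : -(B/a) ≤ z := by
  have h1 : 0 < Mv * Real.exp z := by positivity
  rw [← neg_div, div_le_iff₀ ha]
  nlinarith

variable {n m : ℕ}

/-- the Sinkhorn potential function. -/
private def skF (M : Matrix (Fin n) (Fin m) ℝ) (r : Fin n → ℝ) (c : Fin m → ℝ)
    (p : (Fin n → ℝ) × (Fin m → ℝ)) : ℝ :=
  (∑ i, ∑ j, M i j * Real.exp (p.1 i + p.2 j)) - (∑ i, r i * p.1 i) - (∑ j, c j * p.2 j)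
  + ((∑ i, r i * p.1 i) - (∑ j, c j * p.2 j))^2

private lemma skF_cont (M : Matrix (Fin n) (Fin m) ℝ) (r : Fin n → ℝ)
    (c : Fin m → ℝ) : Continuous (skF M r c) := by
  unfold skF
  fun_prop

/-- key algebraic identity splitting the potential into per-entry terms. -/
private lemma skF_eq (M : Matrix (Fin n) (Fin m) ℝ) (r : Fin n → ℝ)
    (c : Fin m → ℝ) (hsum : ∑ i, r i = ∑ j, c j) (hS : (0:ℝ) < ∑ j, c j)
    (p : (Fin n → ℝ) × (Fin m → ℝ)) :
    skF M r c p = ∑ i, ∑ j, (M i j * Real.exp (p.1 i + p.2 j)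
        - (r i * c j / (∑ j, c j)) * (p.1 i + p.2 j))
      + ((∑ i, r i * p.1 i) - (∑ j, c j * p.2 j))^2 := by
  have key : ∑ i, ∑ j, (r i * c j / (∑ j, c j)) * (p.1 i + p.2 j)
      = (∑ i, r i * p.1 i) + (∑ j, c j * p.2 j) := by
    have h1 : ∀ i, ∑ j, (r i * c j / (∑ j, c j)) * (p.1 i + p.2 j)
        = r i * p.1 i + r i / (∑ j, c j) * ∑ j, c j * p.2 j := by
      intro i
      have e : ∀ j, (r i * c j / (∑ j, c j)) * (p.1 i + p.2 j)
          = (r i * p.1 i / (∑ j, c j)) * c j + (r i / (∑ j, c j)) * (c j * p.2 j) := by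
        intro j; ring
      rw [Finset.sum_congr rfl (fun j _ => e j), Finset.sum_add_distrib,
        ← Finset.mul_sum, ← Finset.mul_sum]
      field_simp
    rw [Finset.sum_congr rfl (fun i _ => h1 i), Finset.sum_add_distrib, ← Finset.sum_mul,
      ← Finset.sum_div, hsum, div_self hS.ne', one_mul]
  unfold skF
  simp only [Finset.sum_sub_distrib]
  rw [key]
  ring

private lemma sk_coercive (hn : 0 < n) (hm : 0 < m)
    (M : Matrix (Fin n) (Fin m) ℝ) (hM : ∀ i j, 0 < M i j)
    (r : Fin n → ℝ) (c : Fin m → ℝ) (hr : ∀ i, 0 < r i) (hc : ∀ j, 0 < c j)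
    (hsum : ∑ i, r i = ∑ j, c j) (b : ℝ) :
    ∃ R, 0 < R ∧ ∀ p : (Fin n → ℝ) × (Fin m → ℝ), skF M r c p ≤ b → ‖p‖ ≤ R := by
  haveI : Nonempty (Fin n) := ⟨⟨0, hn⟩⟩
  haveI : Nonempty (Fin m) := ⟨⟨0, hm⟩⟩
  set i0 : Fin n := ⟨0, hn⟩
  set j0 : Fin m := ⟨0, hm⟩
  set S : ℝ := ∑ j, c j with hSdef
  have hS : 0 < S := Finset.sum_pos (fun j _ => hc j) Finset.univ_nonempty
  set a : Fin n → Fin m → ℝ := fun i j => r i * c j / S with hadef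
  have ha : ∀ i j, 0 < a i j := fun i j => by
    have := hr i; have := hc j; positivity
  set β : ℝ := ∑ i, ∑ j, (a i j)^2 / M i j with hβdef
  have hβ0 : 0 ≤ β := Finset.sum_nonneg fun i _ => Finset.sum_nonneg fun j _ => by
    have := hM i j; have := ha i j; positivity
  set B : ℝ := max 1 (b + β) with hBdef
  have hB1 : 1 ≤ B := le_max_left _ _
  have hB0 : 0 < B := lt_of_lt_of_le one_pos hB1
  have hBb : b + β ≤ B := le_max_right _ _
  -- uniform bound on |z k l| for p in the sublevel set
  set D : Fin n × Fin m → ℝ :=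
    fun q => max ((4 * a q.1 q.2 + 4*B)/(M q.1 q.2) + 1) (B / a q.1 q.2) with hDdef
  obtain ⟨C, hC⟩ := Finite.exists_le D
  have hC0 : 0 < C := by
    refine lt_of_lt_of_le ?_ (hC (i0, j0))
    refine lt_of_lt_of_le ?_ (le_max_right _ _)
    have := ha i0 j0; positivity
  -- final radius
  set T : ℝ := (3*S*C + B)/(2*S) with hTdef
  have hT0 : 0 < T := by positivity
  refine ⟨2*C + T, by positivity, fun p hp => ?_⟩
  -- the per-entry term
  set t : Fin n → Fin m → ℝ :=
    fun i j => M i j * Real.exp (p.1 i + p.2 j) - a i j * (p.1 i + p.2 j) with htdef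
  have hteq : skF M r c p = (∑ i, ∑ j, t i j)
      + ((∑ i, r i * p.1 i) - (∑ j, c j * p.2 j))^2 := skF_eq M r c hsum hS p
  set Δ : ℝ := (∑ i, r i * p.1 i) - (∑ j, c j * p.2 j) with hΔdef
  have htlb : ∀ i j, -((a i j)^2 / M i j) ≤ t i j :=
    fun i j => sk_term_lb _ _ _ (hM i j) (ha i j).le
  -- each term is at most B
  have hterm : ∀ k l, t k l ≤ B := by
    intro k l
    have h1 : t k l - β ≤ ∑ i, ∑ j, t i j := by
      have h2 : ∀ i, (if i = k then t k l else 0) - (∑ j, (a i j)^2 / M i j) ≤ ∑ j, t i j := by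
        intro i
        by_cases hik : i = k
        · subst hik
          rw [if_pos rfl]
          have h3 : ∑ j, (t i j + (a i j)^2 / M i j) ≥ t i l + (a i l)^2 / M i l := by
            apply Finset.single_le_sum (f := fun j => t i j + (a i j)^2 / M i j)
              (fun j _ => by have := htlb i j; linarith) (Finset.mem_univ l)
          have h4 : ∑ j, (t i j + (a i j)^2 / M i j)
              = (∑ j, t i j) + ∑ j, (a i j)^2 / M i j := Finset.sum_add_distrib
          have h5 : 0 ≤ (a i l)^2 / M i l := by have := hM i l; positivity
          linarith
        · simp only [if_neg hik]
          have h6 : ∀ j, -((a i j)^2 / M i j) ≤ t i j := htlb i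
          have : ∑ j, -((a i j)^2 / M i j) ≤ ∑ j, t i j :=
            Finset.sum_le_sum fun j _ => h6 j
          rw [Finset.sum_neg_distrib] at this
          linarith
      have h7 := Finset.sum_le_sum (fun i (_ : i ∈ Finset.univ) => h2 i)
      rw [Finset.sum_sub_distrib, Finset.sum_ite_eq' Finset.univ k (fun _ => t k l)] at h7
      simp only [Finset.mem_univ, if_pos] at h7
      rw [← hβdef] at h7
      linarith [h7]
    have hΔ2 : 0 ≤ Δ^2 := sq_nonneg _
    have : skF M r c p ≤ b := hp
    rw [hteq] at this
    linarith
  -- |Δ| ≤ B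
  have hΔB : |Δ| ≤ B := by
    have h1 : Δ^2 ≤ b + β := by
      have h2 : -β ≤ ∑ i, ∑ j, t i j := by
        have : ∑ i, ∑ j, -((a i j)^2 / M i j) ≤ ∑ i, ∑ j, t i j :=
          Finset.sum_le_sum fun i _ => Finset.sum_le_sum fun j _ => htlb i j
        simpa [hβdef, Finset.sum_neg_distrib] using this
      have : skF M r c p ≤ b := hp
      rw [hteq] at this
      linarith
    rw [abs_le]
    constructor <;> nlinarith
  -- |z k l| ≤ C
  have hz : ∀ k l, |p.1 k + p.2 l| ≤ C := by
    intro k l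
    have h1 := sk_z_ub (M k l) (a k l) (p.1 k + p.2 l) B (hM k l) (ha k l) hB0 (by
      have := hterm k l; simpa [htdef] using this)
    have h2 := sk_z_lb (M k l) (a k l) (p.1 k + p.2 l) B (hM k l) (ha k l) (by
      have := hterm k l; simpa [htdef] using this)
    have h3 := hC (k, l)
    simp only [hDdef] at h3
    rw [abs_le]
    constructor
    · have : B / a k l ≤ C := le_trans (le_max_right _ _) h3
      linarith
    · have : (4 * a k l + 4*B)/(M k l) + 1 ≤ C := le_trans (le_max_left _ _) h3
      linarith
  -- bound |y0|
  have hyid : 2 * S * p.2 j0 = (∑ i, r i * (p.1 i + p.2 j0))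
      - (∑ j, c j * ((p.1 i0 + p.2 j) - (p.1 i0 + p.2 j0))) - Δ := by
    have e1 : ∑ i, r i * (p.1 i + p.2 j0) = (∑ i, r i * p.1 i) + S * p.2 j0 := by
      rw [← hsum]
      rw [Finset.sum_congr rfl (fun i _ => by ring :
        ∀ i ∈ Finset.univ, r i * (p.1 i + p.2 j0) = r i * p.1 i + r i * p.2 j0)]
      rw [Finset.sum_add_distrib, ← Finset.sum_mul]
    have e2 : ∑ j, c j * ((p.1 i0 + p.2 j) - (p.1 i0 + p.2 j0))
        = (∑ j, c j * p.2 j) - S * p.2 j0 := by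
      rw [Finset.sum_congr rfl (fun j _ => by ring :
        ∀ j ∈ Finset.univ, c j * ((p.1 i0 + p.2 j) - (p.1 i0 + p.2 j0))
          = c j * p.2 j - c j * p.2 j0)]
      rw [Finset.sum_sub_distrib, ← Finset.sum_mul]
    rw [e1, e2, hΔdef]
    ring
  have habs1 : |∑ i, r i * (p.1 i + p.2 j0)| ≤ S * C := by
    calc |∑ i, r i * (p.1 i + p.2 j0)| ≤ ∑ i, |r i * (p.1 i + p.2 j0)| :=
          Finset.abs_sum_le_sum_abs _ _
      _ ≤ ∑ i, r i * C := Finset.sum_le_sum fun i _ => by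
          rw [abs_mul, abs_of_pos (hr i)]
          exact mul_le_mul_of_nonneg_left (hz i j0) (hr i).le
      _ = S * C := by rw [← Finset.sum_mul, hsum]
  have habs2 : |∑ j, c j * ((p.1 i0 + p.2 j) - (p.1 i0 + p.2 j0))| ≤ S * (2*C) := by
    calc |∑ j, c j * ((p.1 i0 + p.2 j) - (p.1 i0 + p.2 j0))|
        ≤ ∑ j, |c j * ((p.1 i0 + p.2 j) - (p.1 i0 + p.2 j0))| :=
          Finset.abs_sum_le_sum_abs _ _
      _ ≤ ∑ j, c j * (2*C) := Finset.sum_le_sum fun j _ => by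
          rw [abs_mul, abs_of_pos (hc j)]
          refine mul_le_mul_of_nonneg_left ?_ (hc j).le
          calc |(p.1 i0 + p.2 j) - (p.1 i0 + p.2 j0)|
              ≤ |p.1 i0 + p.2 j| + |p.1 i0 + p.2 j0| := abs_sub _ _
            _ ≤ 2*C := by have := hz i0 j; have := hz i0 j0; linarith
      _ = S * (2*C) := by rw [← Finset.sum_mul]
  have hy0 : |p.2 j0| ≤ T := by
    have h1 : |2 * S * p.2 j0| ≤ 3*S*C + B := by
      rw [hyid]
      calc |(∑ i, r i * (p.1 i + p.2 j0))
            - (∑ j, c j * ((p.1 i0 + p.2 j) - (p.1 i0 + p.2 j0))) - Δ|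
          ≤ |∑ i, r i * (p.1 i + p.2 j0)|
            + |∑ j, c j * ((p.1 i0 + p.2 j) - (p.1 i0 + p.2 j0))| + |Δ| := by
            exact (abs_sub _ _).trans (by gcongr; exact abs_sub _ _)
        _ ≤ S*C + S*(2*C) + B := by gcongr
        _ = 3*S*C + B := by ring
    rw [abs_mul, abs_of_pos (by positivity : (0:ℝ) < 2*S)] at h1
    rw [hTdef, le_div_iff₀ (by positivity : (0:ℝ) < 2*S)]
    linarith
  -- bound coordinates
  have hx : ∀ i, |p.1 i| ≤ 2*C + T := by
    intro i
    have : |p.1 i| = |(p.1 i + p.2 j0) - p.2 j0| := by ring_nf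
    rw [this]
    calc |(p.1 i + p.2 j0) - p.2 j0| ≤ |p.1 i + p.2 j0| + |p.2 j0| := abs_sub _ _
      _ ≤ 2*C + T := by have := hz i j0; linarith
  have hy : ∀ j, |p.2 j| ≤ 2*C + T := by
    intro j
    have e : p.2 j = (p.1 i0 + p.2 j) - (p.1 i0 + p.2 j0) + p.2 j0 := by ring
    rw [e]
    calc |(p.1 i0 + p.2 j) - (p.1 i0 + p.2 j0) + p.2 j0|
        ≤ |(p.1 i0 + p.2 j) - (p.1 i0 + p.2 j0)| + |p.2 j0| := abs_add_le _ _
      _ ≤ (|p.1 i0 + p.2 j| + |p.1 i0 + p.2 j0|) + |p.2 j0| := by gcongr; exact abs_sub _ _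
      _ ≤ 2*C + T := by have := hz i0 j; have := hz i0 j0; linarith
  -- conclude norm bound
  have hR0 : (0:ℝ) ≤ 2*C + T := by positivity
  rw [Prod.norm_def, max_le_iff]
  constructor
  · rw [pi_norm_le_iff_of_nonneg hR0]
    intro i; rw [Real.norm_eq_abs]; exact hx i
  · rw [pi_norm_le_iff_of_nonneg hR0]
    intro j; rw [Real.norm_eq_abs]; exact hy j


private lemma sk_row_deriv (M : Matrix (Fin n) (Fin m) ℝ) (r : Fin n → ℝ) (c : Fin m → ℝ)
    (x : Fin n → ℝ) (y : Fin m → ℝ) (i : Fin n) :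
    HasDerivAt (fun t => skF M r c (Function.update x i t, y))
      ((∑ j, M i j * Real.exp (x i + y j)) - r i
        + 2 * ((∑ i, r i * x i) - (∑ j, c j * y j)) * r i) (x i) := by
  have hA : ∀ i' : Fin n, HasDerivAt
      (fun t => ∑ j, M i' j * Real.exp (Function.update x i t i' + y j))
      (if i' = i then ∑ j, M i j * Real.exp (x i + y j) else 0) (x i) := by
    intro i'
    by_cases hii : i' = i
    · subst hii
      simp only [Function.update_self, if_pos rfl]
      apply HasDerivAt.fun_sum
      intro j _
      have h1 : HasDerivAt (fun t : ℝ => t + y j) 1 (x i') := (hasDerivAt_id _).add_const _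
      have h2 := (h1.exp).const_mul (M i' j)
      simpa using h2
    · simp only [Function.update_of_ne hii]
      rw [if_neg hii]
      exact hasDerivAt_const _ _
  have hAsum : HasDerivAt
      (fun t => ∑ i', ∑ j, M i' j * Real.exp (Function.update x i t i' + y j))
      (∑ j, M i j * Real.exp (x i + y j)) (x i) := by
    have := HasDerivAt.fun_sum (fun i' (_ : i' ∈ Finset.univ) => hA i')
    simpa [Finset.sum_ite_eq' Finset.univ i] using this
  have hL : HasDerivAt (fun t => ∑ i', r i' * Function.update x i t i') (r i) (x i) := by
    have h : ∀ i' : Fin n, HasDerivAt (fun t => r i' * Function.update x i t i')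
        (if i' = i then r i else 0) (x i) := by
      intro i'
      by_cases hii : i' = i
      · subst hii
        simp only [Function.update_self, if_pos rfl]
        simpa using (hasDerivAt_id (x i')).const_mul (r i')
      · simp only [Function.update_of_ne hii]
        rw [if_neg hii]
        exact hasDerivAt_const _ _
    have := HasDerivAt.fun_sum (fun i' (_ : i' ∈ Finset.univ) => h i')
    simpa [Finset.sum_ite_eq' Finset.univ i] using this
  have hQ : HasDerivAt
      (fun t => ((∑ i', r i' * Function.update x i t i') - (∑ j, c j * y j))^2)
      (2 * ((∑ i', r i' * x i') - (∑ j, c j * y j)) * r i) (x i) := by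
    have h1 := (hL.sub_const (∑ j, c j * y j)).fun_pow 2
    have e : (fun t => ((∑ i', r i' * Function.update x i t i') - ∑ j, c j * y j) ^ 2)
        = fun t => ((∑ i', r i' * Function.update x i t i') - ∑ j, c j * y j) ^ 2 := rfl
    refine h1.congr_deriv ?_
    have : Function.update x i (x i) = x := Function.update_eq_self i x
    rw [this]
    ring
  have htotal := ((hAsum.sub hL).sub_const (∑ j, c j * y j)).add hQ
  have e2 : (fun t => skF M r c (Function.update x i t, y))
      = fun t => ((∑ i', ∑ j, M i' j * Real.exp (Function.update x i t i' + y j))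
          - (∑ i', r i' * Function.update x i t i') - (∑ j, c j * y j)
          + ((∑ i', r i' * Function.update x i t i') - (∑ j, c j * y j))^2) := rfl
  rw [e2]
  exact htotal


private lemma sk_col_deriv (M : Matrix (Fin n) (Fin m) ℝ) (r : Fin n → ℝ) (c : Fin m → ℝ)
    (x : Fin n → ℝ) (y : Fin m → ℝ) (j : Fin m) :
    HasDerivAt (fun t => skF M r c (x, Function.update y j t))
      ((∑ i, M i j * Real.exp (x i + y j)) - c j
        - 2 * ((∑ i, r i * x i) - (∑ j, c j * y j)) * c j) (y j) := by
  have hA : ∀ i : Fin n, HasDerivAt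
      (fun t => ∑ j', M i j' * Real.exp (x i + Function.update y j t j'))
      (M i j * Real.exp (x i + y j)) (x := y j) := by
    intro i
    have h : ∀ j' : Fin m, HasDerivAt
        (fun t => M i j' * Real.exp (x i + Function.update y j t j'))
        (if j' = j then M i j * Real.exp (x i + y j) else 0) (y j) := by
      intro j'
      by_cases hjj : j' = j
      · subst hjj
        simp only [Function.update_self, if_pos rfl]
        have h1 : HasDerivAt (fun t : ℝ => x i + t) 1 (y j') :=
          (hasDerivAt_id _).const_add _
        have h2 := (h1.exp).const_mul (M i j')
        simpa using h2
      · simp only [Function.update_of_ne hjj]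
        rw [if_neg hjj]
        exact hasDerivAt_const _ _
    have := HasDerivAt.fun_sum (fun j' (_ : j' ∈ Finset.univ) => h j')
    simpa [Finset.sum_ite_eq' Finset.univ j] using this
  have hAsum : HasDerivAt
      (fun t => ∑ i, ∑ j', M i j' * Real.exp (x i + Function.update y j t j'))
      (∑ i, M i j * Real.exp (x i + y j)) (y j) :=
    HasDerivAt.fun_sum (fun i (_ : i ∈ Finset.univ) => hA i)
  have hL : HasDerivAt (fun t => ∑ j', c j' * Function.update y j t j') (c j) (y j) := by
    have h : ∀ j' : Fin m, HasDerivAt (fun t => c j' * Function.update y j t j')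
        (if j' = j then c j else 0) (y j) := by
      intro j'
      by_cases hjj : j' = j
      · subst hjj
        simp only [Function.update_self, if_pos rfl]
        simpa using (hasDerivAt_id (y j')).const_mul (c j')
      · simp only [Function.update_of_ne hjj]
        rw [if_neg hjj]
        exact hasDerivAt_const _ _
    have := HasDerivAt.fun_sum (fun j' (_ : j' ∈ Finset.univ) => h j')
    simpa [Finset.sum_ite_eq' Finset.univ j] using this
  have hQ : HasDerivAt
      (fun t => ((∑ i, r i * x i) - (∑ j', c j' * Function.update y j t j'))^2)
      (- (2 * ((∑ i, r i * x i) - (∑ j, c j * y j)) * c j)) (y j) := by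
    have h1 := (hL.const_sub (∑ i, r i * x i)).fun_pow 2
    refine h1.congr_deriv ?_
    have : Function.update y j (y j) = y := Function.update_eq_self j y
    rw [this]
    ring
  have htotal := (((hAsum.sub_const (∑ i, r i * x i)).sub hL).add hQ)
  have e2 : (fun t => skF M r c (x, Function.update y j t))
      = fun t => ((∑ i, ∑ j', M i j' * Real.exp (x i + Function.update y j t j'))
          - (∑ i, r i * x i) - (∑ j', c j' * Function.update y j t j')
          + ((∑ i, r i * x i) - (∑ j', c j' * Function.update y j t j'))^2) := rfl
  rw [e2]
  exact htotal.congr_deriv (by ring)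

/-- Main case of Sinkhorn: `n, m > 0`. -/
private lemma sk_main (hn : 0 < n) (hm : 0 < m)
    (M : Matrix (Fin n) (Fin m) ℝ) (hM : ∀ i j, 0 < M i j)
    (r : Fin n → ℝ) (c : Fin m → ℝ) (hr : ∀ i, 0 < r i) (hc : ∀ j, 0 < c j)
    (hsum : ∑ i, r i = ∑ j, c j) :
    ∃ (u : Fin n → ℝ) (v : Fin m → ℝ), (∀ i, 0 < u i) ∧ (∀ j, 0 < v j) ∧
      (∀ i, ∑ j, u i * M i j * v j = r i) ∧
      (∀ j, ∑ i, u i * M i j * v j = c j) := by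
  haveI : Nonempty (Fin n) := ⟨⟨0, hn⟩⟩
  haveI : Nonempty (Fin m) := ⟨⟨0, hm⟩⟩
  have hS : (0:ℝ) < ∑ j, c j := Finset.sum_pos (fun j _ => hc j) Finset.univ_nonempty
  obtain ⟨R, hR0, hR⟩ := sk_coercive hn hm M hM r c hr hc hsum (skF M r c 0)
  set K := Metric.closedBall (0 : (Fin n → ℝ) × (Fin m → ℝ)) R with hK
  have hKc : IsCompact K := isCompact_closedBall _ _
  have h0K : (0 : (Fin n → ℝ) × (Fin m → ℝ)) ∈ K := Metric.mem_closedBall_self hR0.le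
  obtain ⟨p, hpK, hpmin⟩ := hKc.exists_isMinOn ⟨0, h0K⟩ (skF_cont M r c).continuousOn
  have hglobal : ∀ q, skF M r c p ≤ skF M r c q := by
    intro q
    by_cases hq : skF M r c q ≤ skF M r c 0
    · have hqK : q ∈ K := by
        rw [hK, mem_closedBall_zero_iff]
        exact hR q hq
      exact hpmin hqK
    · push_neg at hq
      exact le_trans (hpmin h0K) hq.le
  obtain ⟨x, y⟩ := p
  have hrow : ∀ i, (∑ j, M i j * Real.exp (x i + y j)) - r i
      + 2 * ((∑ i, r i * x i) - (∑ j, c j * y j)) * r i = 0 := by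
    intro i
    have hloc : IsLocalMin (fun t => skF M r c (Function.update x i t, y)) (x i) := by
      apply Filter.Eventually.of_forall
      intro t
      have e : Function.update x i (x i) = x := Function.update_eq_self i x
      show (fun t => skF M r c (Function.update x i t, y)) (x i) ≤ _
      simp only [e]
      exact hglobal _
    exact hloc.hasDerivAt_eq_zero (sk_row_deriv M r c x y i)
  have hcol : ∀ j, (∑ i, M i j * Real.exp (x i + y j)) - c j
      - 2 * ((∑ i, r i * x i) - (∑ j, c j * y j)) * c j = 0 := by
    intro j
    have hloc : IsLocalMin (fun t => skF M r c (x, Function.update y j t)) (y j) := by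
      apply Filter.Eventually.of_forall
      intro t
      have e : Function.update y j (y j) = y := Function.update_eq_self j y
      show (fun t => skF M r c (x, Function.update y j t)) (y j) ≤ _
      simp only [e]
      exact hglobal _
    exact hloc.hasDerivAt_eq_zero (sk_col_deriv M r c x y j)
  set Δ : ℝ := (∑ i, r i * x i) - (∑ j, c j * y j) with hΔdef
  have hΔ0 : Δ = 0 := by
    have h1 : ∑ i, ∑ j, M i j * Real.exp (x i + y j) = (∑ i, r i) * (1 - 2*Δ) := by
      rw [Finset.sum_congr rfl (fun i _ => by linear_combination (hrow i) :
        ∀ i ∈ Finset.univ, ∑ j, M i j * Real.exp (x i + y j) = r i * (1 - 2*Δ))]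
      rw [← Finset.sum_mul]
    have h2 : ∑ j, ∑ i, M i j * Real.exp (x i + y j) = (∑ j, c j) * (1 + 2*Δ) := by
      rw [Finset.sum_congr rfl (fun j _ => by linear_combination (hcol j) :
        ∀ j ∈ Finset.univ, ∑ i, M i j * Real.exp (x i + y j) = c j * (1 + 2*Δ))]
      rw [← Finset.sum_mul]
    have h3 : (∑ i, r i) * (1 - 2*Δ) = (∑ j, c j) * (1 + 2*Δ) := by
      rw [← h1, ← h2, Finset.sum_comm]
    rw [hsum] at h3
    have h4 := mul_left_cancel₀ hS.ne' h3
    linarith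
  refine ⟨fun i => Real.exp (x i), fun j => Real.exp (y j),
    fun i => Real.exp_pos _, fun j => Real.exp_pos _, ?_, ?_⟩
  · intro i
    have e : ∀ j, Real.exp (x i) * M i j * Real.exp (y j)
        = M i j * Real.exp (x i + y j) := fun j => by rw [Real.exp_add]; ring
    rw [Finset.sum_congr rfl (fun j _ => e j)]
    have h := hrow i
    rw [hΔ0] at h
    linarith
  · intro j
    have e : ∀ i, Real.exp (x i) * M i j * Real.exp (y j)
        = M i j * Real.exp (x i + y j) := fun i => by rw [Real.exp_add]; ring
    rw [Finset.sum_congr rfl (fun i _ => e i)]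
    have h := hcol j
    rw [hΔ0] at h
    linarith

end SinkhornAux

/-- Sinkhorn's theorem (existence): for a strictly positive `n × m` matrix `M` and
strictly positive vectors `r`, `c` with `Σ_i r_i = Σ_j c_j`, there exist strictly
positive vectors `u`, `v` such that the matrix `P_ij = u_i · M_ij · v_j` has row sums
`r` and column sums `c`. -/
theorem sinkhorn_existence {n m : ℕ} (M : Matrix (Fin n) (Fin m) ℝ)
    (hM : ∀ i j, 0 < M i j) (r : Fin n → ℝ) (c : Fin m → ℝ)
    (hr : ∀ i, 0 < r i) (hc : ∀ j, 0 < c j)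
    (hsum : ∑ i, r i = ∑ j, c j) :
    ∃ (u : Fin n → ℝ) (v : Fin m → ℝ), (∀ i, 0 < u i) ∧ (∀ j, 0 < v j) ∧
      (∀ i, ∑ j, u i * M i j * v j = r i) ∧
      (∀ j, ∑ i, u i * M i j * v j = c j) := by
  rcases Nat.eq_zero_or_pos n with hn | hn
  · subst hn
    rcases Nat.eq_zero_or_pos m with hm | hm
    · subst hm
      exact ⟨Fin.elim0, Fin.elim0, fun i => i.elim0, fun j => j.elim0,
        fun i => i.elim0, fun j => j.elim0⟩
    · exfalso
      haveI : Nonempty (Fin m) := ⟨⟨0, hm⟩⟩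
      have h1 : (0:ℝ) < ∑ j, c j := Finset.sum_pos (fun j _ => hc j) Finset.univ_nonempty
      have h2 : ∑ i : Fin 0, r i = 0 := by simp
      rw [h2] at hsum
      linarith
  · rcases Nat.eq_zero_or_pos m with hm | hm
    · subst hm
      exfalso
      haveI : Nonempty (Fin n) := ⟨⟨0, hn⟩⟩
      have h1 : (0:ℝ) < ∑ i, r i := Finset.sum_pos (fun i _ => hr i) Finset.univ_nonempty
      have h2 : ∑ j : Fin 0, c j = 0 := by simp
      rw [h2] at hsum
      linarith
    · exact sk_main hn hm M hM r c hr hc hsum
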